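/- In ℂ[x₂,x₃,x₄,z₄,z₅,z₆], set G₆ = ½(6x₂z₄ − z₆). Then: ℒ₁G₆ = x₃z₄ − x₂z₅; ℒ₁²G₆ = x₄z₄ − x₂z₆; ℒ₁³G₆ = 8x₂(x₃z₄ − x₂z₅) + (x₄z₅ − x₃z₆) + 4z₄z₅; and ℒ₃G₆ = z₄z₅ − x₂(x₃z₄ − x₂z₅) − ½(x₄z₅ − x₃z₆). -/
import Mathlib


open MvPolynomial

noncomputable section

/-- The polynomial ring ℂ[x₂,x₃,x₄,z₄,z₅,z₆];
`X 0 = x₂`, `X 1 = x₃`, `X 2 = x₄`, `X 3 = z₄`, `X 4 = z₅`, `X 5 = z₆`. -/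
abbrev R6 : Type := MvPolynomial (Fin 6) ℂ

def x2 : R6 := X 0
def x3 : R6 := X 1
def x4 : R6 := X 2
def z4 : R6 := X 3
def z5 : R6 := X 4
def z6 : R6 := X 5

/-- P₅ = 4(3x₂x₃ + z₅) -/
def P5 : R6 := 4 * (3 * x2 * x3 + z5)
/-- P₇ = 4(2x₂z₅ + x₃z₄) -/
def P7 : R6 := 4 * (2 * x2 * z5 + x3 * z4)
/-- G₆' = x₃z₄ − x₂z₅ -/
def G6' : R6 := x3 * z4 - x2 * z5
/-- G₆'' = x₄z₄ − x₂z₆ -/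
def G6'' : R6 := x4 * z4 - x2 * z6
/-- G₆''' = 8x₂(x₃z₄ − x₂z₅) + (x₄z₅ − x₃z₆) + 4z₄z₅ -/
def G6''' : R6 := 8 * x2 * (x3 * z4 - x2 * z5) + (x4 * z5 - x3 * z6) + 4 * z4 * z5

/-- ℒ₁ = x₃∂/∂x₂ + x₄∂/∂x₃ + P₅∂/∂x₄ + z₅∂/∂z₄ + z₆∂/∂z₅ + P₇∂/∂z₆ -/
def L1 (P : R6) : R6 :=
  x3 * pderiv (0 : Fin 6) P + x4 * pderiv (1 : Fin 6) P + P5 * pderiv (2 : Fin 6) P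
    + z5 * pderiv (3 : Fin 6) P + z6 * pderiv (4 : Fin 6) P + P7 * pderiv (5 : Fin 6) P

/-- ℒ₃ = z₅∂/∂x₂ + z₆∂/∂x₃ + P₇∂/∂x₄ + G₆'∂/∂z₄ + G₆''∂/∂z₅ + G₆'''∂/∂z₆ -/
def L3 (P : R6) : R6 :=
  z5 * pderiv (0 : Fin 6) P + z6 * pderiv (1 : Fin 6) P + P7 * pderiv (2 : Fin 6) P
    + G6' * pderiv (3 : Fin 6) P + G6'' * pderiv (4 : Fin 6) P + G6''' * pderiv (5 : Fin 6) P

/-- G₆ = ½(6x₂z₄ − z₆) -/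
def G6 : R6 := C (1/2 : ℂ) * (6 * x2 * z4 - z6)

theorem derivatives_of_G6 :
    L1 G6 = x3 * z4 - x2 * z5 ∧
    L1 (L1 G6) = x4 * z4 - x2 * z6 ∧
    L1 (L1 (L1 G6)) = 8 * x2 * (x3 * z4 - x2 * z5) + (x4 * z5 - x3 * z6) + 4 * z4 * z5 ∧
    L3 G6 = z4 * z5 - x2 * (x3 * z4 - x2 * z5)
      - C (1/2 : ℂ) * (x4 * z5 - x3 * z6) := by
  have pd : ∀ (i : Fin 6) (n : ℕ) [n.AtLeastTwo],
      pderiv i (OfNat.ofNat n : R6) = 0 := by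
    intro i n _
    rw [← map_ofNat (C : ℂ →+* R6) n, pderiv_C]
  have hC : (C (1/2 : ℂ) : R6) * 2 = 1 := by
    rw [← map_ofNat (C : ℂ →+* R6) 2, ← C_mul]
    norm_num
  have h1 : L1 G6 = x3 * z4 - x2 * z5 := by
    simp only [L1, G6, x2, x3, x4, z4, z5, z6, P5, P7, pderiv_mul, map_sub, map_add, pderiv_C,
      pderiv_X_self, pderiv_X_of_ne, pd, Fin.reduceEq, ne_eq, not_false_eq_true]
    linear_combination (X 1 * X 3 - X 0 * X 4 : R6) * hC
  have h2 : L1 (x3 * z4 - x2 * z5) = x4 * z4 - x2 * z6 := by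
    simp only [L1, x2, x3, x4, z4, z5, z6, P5, P7, pderiv_mul, map_sub, map_add, pderiv_C,
      pderiv_X_self, pderiv_X_of_ne, pd, Fin.reduceEq, ne_eq, not_false_eq_true]
    ring
  have h3 : L1 (x4 * z4 - x2 * z6)
      = 8 * x2 * (x3 * z4 - x2 * z5) + (x4 * z5 - x3 * z6) + 4 * z4 * z5 := by
    simp only [L1, x2, x3, x4, z4, z5, z6, P5, P7, pderiv_mul, map_sub, map_add, pderiv_C,
      pderiv_X_self, pderiv_X_of_ne, pd, Fin.reduceEq, ne_eq, not_false_eq_true]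
    ring
  have h4 : L3 G6 = z4 * z5 - x2 * (x3 * z4 - x2 * z5)
      - C (1/2 : ℂ) * (x4 * z5 - x3 * z6) := by
    simp only [L3, G6, x2, x3, x4, z4, z5, z6, P5, P7, G6', G6'', G6''' , pderiv_mul, map_sub,
      map_add, pderiv_C, pderiv_X_self, pderiv_X_of_ne, pd, Fin.reduceEq, ne_eq,
      not_false_eq_true]
    linear_combination (X 3 * X 4 - X 0 * (X 1 * X 3 - X 0 * X 4) : R6) * hC
  exact ⟨h1, by rw [h1, h2], by rw [h1, h2, h3], h4⟩
end
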